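/- arXiv:2212.02136 — 2 statements merged into one kernel-verified Lean document; each statement's English description precedes it below -/
import Mathlib

section
/- (Lemma 1) Let τ ≥ 1 be an integer and let η > 0 satisfy η ≤ 1/(4Lτ). Define the random point x̄⁺ = x̄ − (ητ/N)·Σ_{i=1}^N G_i. Then E[f(x̄⁺)] ≤ f(x̄) − (ητ/4)·‖∇f(x̄)‖² + (ηL²τ/N)·Σ_{i=1}^N ‖x̄ − x_i‖² + σ²η²τ²L/N. -/
open Finset MeasureTheory RealInnerProductSpace

section Aux


variable {d N : ℕ} {Ω : Type*} [MeasurableSpace Ω]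
local notation "E" => EuclideanSpace ℝ (Fin d)

private lemma sgd_grad_norm_eq (F : E → ℝ) (z : E) (g : E) :
    ‖fderiv ℝ F z - innerSL ℝ g‖ = ‖gradient F z - g‖ := by
  have h1 : innerSL ℝ g = InnerProductSpace.toDual ℝ E g := by
    ext y; simp [InnerProductSpace.toDual_apply_apply]
  have h2 : fderiv ℝ F z = InnerProductSpace.toDual ℝ E (gradient F z) := by
    rw [gradient, LinearIsometryEquiv.apply_symm_apply]
  rw [h1, h2, ← map_sub, LinearIsometryEquiv.norm_map]

private lemma sgd_descent_aux (F : E → ℝ) (hF : Differentiable ℝ F) (L : ℝ) (hL : 0 ≤ L)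
    (hLip : ∀ y z : E, ‖gradient F y - gradient F z‖ ≤ L * ‖y - z‖) (x y : E) :
    |F y - F x - ⟪gradient F x, y - x⟫| ≤ L * ‖y - x‖ ^ 2 := by
  set g := gradient F x with hg
  set h : E → ℝ := fun z => F z - ⟪g, z⟫ with hh
  have key : ‖h y - h x‖ ≤ (L * ‖y - x‖) * ‖y - x‖ := by
    apply (convex_segment x y).norm_image_sub_le_of_norm_hasFDerivWithin_le
      (f' := fun z => fderiv ℝ F z - innerSL ℝ g)
      (fun z _ => (((hF z).hasFDerivAt).sub ((innerSL ℝ g).hasFDerivAt)).hasFDerivWithinAt)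
      ?_ (left_mem_segment ℝ x y) (right_mem_segment ℝ x y)
    intro z hz
    rw [sgd_grad_norm_eq F z]
    calc ‖gradient F z - g‖ ≤ L * ‖z - x‖ := hLip z x
      _ ≤ L * ‖y - x‖ := by
        rcases (segment_eq_image' ℝ x y ▸ hz : z ∈ _) with ⟨t, ht, rfl⟩
        have heq : ‖x + t • (y - x) - x‖ = t * ‖y - x‖ := by
          rw [add_sub_cancel_left, norm_smul, Real.norm_eq_abs, abs_of_nonneg ht.1]
        rw [heq]
        have := ht.2
        nlinarith [norm_nonneg (y - x), ht.1, hL, mul_nonneg hL (norm_nonneg (y - x))]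
  have hxy : h y - h x = F y - F x - ⟪g, y - x⟫ := by
    simp only [hh, inner_sub_right]; ring
  calc |F y - F x - ⟪g, y - x⟫| = ‖h y - h x‖ := by rw [hxy]; rfl
    _ ≤ L * ‖y - x‖ * ‖y - x‖ := key
    _ = L * ‖y - x‖ ^ 2 := by ring

private lemma sgd_grad_avg (f : Fin N → E → ℝ) (hdiff : ∀ i, Differentiable ℝ (f i)) (z : E) :
    gradient (fun z : E => (1 / (N : ℝ)) * ∑ i, f i z) z
      = (1 / (N : ℝ)) • ∑ i, gradient (f i) z := by
  have hsum : DifferentiableAt ℝ (fun z : E => ∑ i, f i z) z :=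
    DifferentiableAt.fun_sum (fun i _ => (hdiff i) z)
  have h1 : fderiv ℝ (fun z : E => (1 / (N : ℝ)) * ∑ i, f i z) z
      = (1 / (N : ℝ)) • ∑ i, fderiv ℝ (f i) z := by
    rw [fderiv_const_mul hsum, fderiv_fun_sum (fun i _ => (hdiff i) z)]
  rw [gradient, h1, _root_.map_smul, _root_.map_sum]
  rfl

private lemma sgd_inner_eq_sum (a b : E) : ⟪a, b⟫ = ∑ k, a k * b k := by
  simp [PiLp.inner_apply, RCLike.inner_apply, conj_trivial]
  exact Finset.sum_congr rfl (fun _ _ => mul_comm _ _)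

private lemma sgd_indep_inner_int (μ : Measure Ω) [IsProbabilityMeasure μ]
    (X Y : Ω → E) (hXY : ProbabilityTheory.IndepFun X Y μ)
    (hX : Integrable X μ) (hY : Integrable Y μ) :
    Integrable (fun ω => ⟪X ω, Y ω⟫) μ ∧
      ∫ ω, ⟪X ω, Y ω⟫ ∂μ = ⟪∫ ω, X ω ∂μ, ∫ ω, Y ω ∂μ⟫ := by
  have hmeas : ∀ k : Fin d, Measurable (fun v : E => v k) :=
    fun k => (EuclideanSpace.proj (𝕜 := ℝ) k).continuous.measurable
  have hik : ∀ k, ProbabilityTheory.IndepFun (fun ω => X ω k) (fun ω => Y ω k) μ :=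
    fun k => hXY.comp (hmeas k) (hmeas k)
  have hXk : ∀ k, Integrable (fun ω => X ω k) μ :=
    fun k => (EuclideanSpace.proj (𝕜 := ℝ) k).integrable_comp hX
  have hYk : ∀ k, Integrable (fun ω => Y ω k) μ :=
    fun k => (EuclideanSpace.proj (𝕜 := ℝ) k).integrable_comp hY
  have hmul : ∀ k, Integrable (fun ω => X ω k * Y ω k) μ :=
    fun k => (hik k).integrable_mul (hXk k) (hYk k)
  constructor
  · have heq : (fun ω => ⟪X ω, Y ω⟫) = fun ω => ∑ k, X ω k * Y ω k := by
      funext ω; exact sgd_inner_eq_sum _ _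
    rw [heq]
    exact integrable_finset_sum _ (fun k _ => hmul k)
  · have hpk : ∀ (Z : Ω → E), Integrable Z μ → ∀ k, ∫ ω, Z ω k ∂μ = (∫ ω, Z ω ∂μ) k :=
      fun Z hZ k => (EuclideanSpace.proj (𝕜 := ℝ) k).integral_comp_comm hZ
    calc ∫ ω, ⟪X ω, Y ω⟫ ∂μ = ∫ ω, ∑ k, X ω k * Y ω k ∂μ := by
          simp only [sgd_inner_eq_sum]
      _ = ∑ k, ∫ ω, X ω k * Y ω k ∂μ := integral_finset_sum _ (fun k _ => hmul k)
      _ = ∑ k, (∫ ω, X ω k ∂μ) * (∫ ω, Y ω k ∂μ) := by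
          refine Finset.sum_congr rfl (fun k _ => ?_)
          exact (hik k).integral_fun_mul_eq_mul_integral (hXk k).1 (hYk k).1
      _ = ∑ k, (∫ ω, X ω ∂μ) k * (∫ ω, Y ω ∂μ) k := by
          refine Finset.sum_congr rfl (fun k _ => ?_)
          rw [hpk X hX k, hpk Y hY k]
      _ = ⟪∫ ω, X ω ∂μ, ∫ ω, Y ω ∂μ⟫ := (sgd_inner_eq_sum _ _).symm

private lemma sgd_norm_avg_le (v : Fin N → E) (b : Fin N → ℝ) (h : ∀ i, ‖v i‖ ≤ b i) :
    ‖(1 / (N : ℝ)) • ∑ i, v i‖ ≤ (1 / (N : ℝ)) * ∑ i, b i := by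
  rw [norm_smul, Real.norm_eq_abs, abs_of_nonneg (by positivity)]
  gcongr
  exact (norm_sum_le _ _).trans (Finset.sum_le_sum (fun i _ => h i))

end Aux

set_option maxHeartbeats 1000000 in
/-- **Lemma 1** (per-round descent inequality for decentralized SGD). -/
theorem stmt_0 (d N : ℕ) (hN : 1 ≤ N)
    {Ω : Type*} [MeasurableSpace Ω] (μ : Measure Ω) [IsProbabilityMeasure μ]
    (L σ η : ℝ) (hL : 0 < L) (hσ : 0 ≤ σ)
    (f : Fin N → EuclideanSpace ℝ (Fin d) → ℝ)
    (hdiff : ∀ i, Differentiable ℝ (f i))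
    (hLip : ∀ i x y, ‖gradient (f i) y - gradient (f i) x‖ ≤ L * ‖y - x‖)
    (F : EuclideanSpace ℝ (Fin d) → ℝ)
    (hF : F = fun z => (1 / (N : ℝ)) * ∑ i, f i z)
    (x : Fin N → EuclideanSpace ℝ (Fin d))
    (xbar : EuclideanSpace ℝ (Fin d))
    (hxbar : xbar = (1 / (N : ℝ)) • ∑ i, x i)
    (G : Fin N → Ω → EuclideanSpace ℝ (Fin d))
    (hGint : ∀ i, Integrable (G i) μ)
    (hindep : ProbabilityTheory.iIndepFun G μ)
    (hmean : ∀ i, ∫ ω, G i ω ∂μ = gradient (f i) (x i))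
    (hvarint : ∀ i, Integrable (fun ω => ‖G i ω - gradient (f i) (x i)‖ ^ 2) μ)
    (hvar : ∀ i, ∫ ω, ‖G i ω - gradient (f i) (x i)‖ ^ 2 ∂μ ≤ σ ^ 2)
    (τ : ℕ) (hτ : 1 ≤ τ) (hη : 0 < η) (hητ : η ≤ 1 / (4 * L * τ))
    (xplus : Ω → EuclideanSpace ℝ (Fin d))
    (hxplus : ∀ ω, xplus ω = xbar - ((η * τ) / (N : ℝ)) • ∑ i, G i ω) :
    ∫ ω, F (xplus ω) ∂μ ≤
      F xbar - (η * τ / 4) * ‖gradient F xbar‖ ^ 2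
        + (η * L ^ 2 * τ / (N : ℝ)) * ∑ i, ‖xbar - x i‖ ^ 2
        + σ ^ 2 * η ^ 2 * τ ^ 2 * L / (N : ℝ) := by
  have hNpos : (0 : ℝ) < N := by exact_mod_cast hN
  have hτpos : (1 : ℝ) ≤ τ := by exact_mod_cast hτ
  set ε : ℝ := η * τ with hε
  have hεpos : 0 < ε := by positivity
  -- basic deterministic objects
  set c : Fin N → EuclideanSpace ℝ (Fin d) := fun i => gradient (f i) (x i) with hc
  set gb : EuclideanSpace ℝ (Fin d) := (1 / (N : ℝ)) • ∑ i, c i with hgb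
  set g : EuclideanSpace ℝ (Fin d) := gradient F xbar with hgdef
  have hdiffF : Differentiable ℝ F := by
    rw [hF]; exact (Differentiable.fun_sum (fun i _ => hdiff i)).const_mul _
  have hgradF : ∀ z, gradient F z = (1 / (N : ℝ)) • ∑ i, gradient (f i) z := by
    intro z; rw [hF]; exact sgd_grad_avg f hdiff z
  have hLipF : ∀ y z : EuclideanSpace ℝ (Fin d),
      ‖gradient F y - gradient F z‖ ≤ L * ‖y - z‖ := by
    intro y z
    rw [hgradF, hgradF, ← smul_sub, ← Finset.sum_sub_distrib]
    calc ‖(1 / (N : ℝ)) • ∑ i, (gradient (f i) y - gradient (f i) z)‖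
        ≤ (1 / (N : ℝ)) * ∑ _i : Fin N, L * ‖y - z‖ :=
          sgd_norm_avg_le _ _ (fun i => hLip i z y)
      _ = L * ‖y - z‖ := by
          rw [Finset.sum_const, card_univ, Fintype.card_fin, nsmul_eq_mul]
          field_simp
  have hdescent : ∀ y, |F y - F xbar - ⟪g, y - xbar⟫| ≤ L * ‖y - xbar‖ ^ 2 :=
    fun y => sgd_descent_aux F hdiffF L hL.le hLipF xbar y
  -- deviations
  set D : Fin N → Ω → EuclideanSpace ℝ (Fin d) := fun i ω => G i ω - c i with hD
  have hDint : ∀ i, Integrable (D i) μ := fun i => (hGint i).sub (integrable_const _)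
  have hDmean : ∀ i, ∫ ω, D i ω ∂μ = 0 := by
    intro i
    rw [integral_sub (hGint i) (integrable_const _), hmean, integral_const, probReal_univ]
    simp [hc]
  have hDD0 : ∀ i j, i ≠ j →
      Integrable (fun ω => ⟪D i ω, D j ω⟫) μ ∧ ∫ ω, ⟪D i ω, D j ω⟫ ∂μ = 0 := by
    intro i j hij
    have hmeasφ : ∀ k : Fin N, Measurable (fun v : EuclideanSpace ℝ (Fin d) => v - c k) :=
      fun k => measurable_id.sub measurable_const
    have hindepD : ProbabilityTheory.IndepFun (D i) (D j) μ :=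
      (hindep.indepFun hij).comp (hmeasφ i) (hmeasφ j)
    obtain ⟨h1, h2⟩ := sgd_indep_inner_int μ (D i) (D j) hindepD (hDint i) (hDint j)
    refine ⟨h1, ?_⟩
    rw [h2, hDmean, hDmean, inner_zero_left]
  have hDDself : ∀ i, (fun ω => ⟪D i ω, D i ω⟫) = fun ω => ‖D i ω‖ ^ 2 := by
    intro i; funext ω; exact real_inner_self_eq_norm_sq _
  have hDDint : ∀ i j, Integrable (fun ω => ⟪D i ω, D j ω⟫) μ := by
    intro i j
    rcases eq_or_ne i j with rfl | hij
    · rw [hDDself i]; exact hvarint i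
    · exact (hDD0 i j hij).1
  -- second moment of the sum of deviations
  have hSDeq : (fun ω => ‖∑ i, D i ω‖ ^ 2) = fun ω => ∑ i, ∑ j, ⟪D i ω, D j ω⟫ := by
    funext ω
    rw [← real_inner_self_eq_norm_sq, sum_inner]
    exact Finset.sum_congr rfl (fun i _ => inner_sum _ _ _)
  have hSDint : Integrable (fun ω => ‖∑ i, D i ω‖ ^ 2) μ := by
    rw [hSDeq]
    exact integrable_finset_sum _ (fun i _ => integrable_finset_sum _ (fun j _ => hDDint i j))
  have hSD2 : ∫ ω, ‖∑ i, D i ω‖ ^ 2 ∂μ ≤ N * σ ^ 2 := by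
    rw [hSDeq]
    rw [integral_finset_sum _ (fun i _ => integrable_finset_sum _ (fun j _ => hDDint i j))]
    calc ∑ i, ∫ ω, ∑ j, ⟪D i ω, D j ω⟫ ∂μ
        = ∑ i : Fin N, ∑ j, ∫ ω, ⟪D i ω, D j ω⟫ ∂μ :=
          Finset.sum_congr rfl (fun i _ => integral_finset_sum _ (fun j _ => hDDint i j))
      _ = ∑ i : Fin N, ∫ ω, ⟪D i ω, D i ω⟫ ∂μ := by
          refine Finset.sum_congr rfl (fun i _ => ?_)
          exact Finset.sum_eq_single i (fun j _ hj => (hDD0 i j (Ne.symm hj)).2)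
            (fun h => absurd (mem_univ i) h)
      _ ≤ ∑ _i : Fin N, σ ^ 2 := by
          refine Finset.sum_le_sum (fun i _ => ?_)
          rw [hDDself i]; exact hvar i
      _ = N * σ ^ 2 := by rw [Finset.sum_const, card_univ, Fintype.card_fin, nsmul_eq_mul]
  -- T and its moments
  set T : Ω → EuclideanSpace ℝ (Fin d) := fun ω => (1 / (N : ℝ)) • ∑ i, D i ω with hT
  have hTint : Integrable T μ :=
    (integrable_finset_sum _ (fun i _ => hDint i)).smul ((1 : ℝ) / N)
  have hTmean : ∫ ω, T ω ∂μ = 0 := by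
    rw [hT]
    rw [integral_smul, integral_finset_sum _ (fun i _ => hDint i)]
    simp [hDmean]
  have hT2eq : (fun ω => ‖T ω‖ ^ 2) = fun ω => (1 / (N : ℝ)) ^ 2 * ‖∑ i, D i ω‖ ^ 2 := by
    funext ω
    rw [hT]
    rw [norm_smul, Real.norm_eq_abs, abs_of_nonneg (by positivity), mul_pow]
  have hT2int : Integrable (fun ω => ‖T ω‖ ^ 2) μ := by
    rw [hT2eq]; exact hSDint.const_mul _
  have hT2 : ∫ ω, ‖T ω‖ ^ 2 ∂μ ≤ σ ^ 2 / N := by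
    rw [hT2eq, integral_const_mul]
    calc (1 / (N : ℝ)) ^ 2 * ∫ ω, ‖∑ i, D i ω‖ ^ 2 ∂μ
        ≤ (1 / (N : ℝ)) ^ 2 * (N * σ ^ 2) :=
          mul_le_mul_of_nonneg_left hSD2 (by positivity)
      _ = σ ^ 2 / N := by field_simp
  -- inner products with T
  have hgTint : Integrable (fun ω => ⟪g, T ω⟫) μ := by
    have := (innerSL ℝ g).integrable_comp hTint
    exact this
  have hgT : ∫ ω, ⟪g, T ω⟫ ∂μ = 0 := by
    rw [integral_inner hTint, hTmean, inner_zero_right]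
  have hgbTint : Integrable (fun ω => ⟪gb, T ω⟫) μ := by
    have := (innerSL ℝ gb).integrable_comp hTint
    exact this
  have hgbT : ∫ ω, ⟪gb, T ω⟫ ∂μ = 0 := by
    rw [integral_inner hTint, hTmean, inner_zero_right]
  -- expressing the step
  set S : Ω → EuclideanSpace ℝ (Fin d) := fun ω => gb + T ω with hS
  have hsumcd : ∀ ω, (∑ i, c i) + ∑ i, D i ω = ∑ i, G i ω := by
    intro ω
    rw [← Finset.sum_add_distrib]
    refine Finset.sum_congr rfl (fun i _ => ?_)
    simp [hD]
  have hv : ∀ ω, xplus ω - xbar = -(ε • S ω) := by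
    intro ω
    have h1 : ε • S ω = (ε / (N : ℝ)) • ∑ i, G i ω := by
      simp only [hS, hgb, hT]
      rw [← smul_add, smul_smul, hsumcd ω, mul_one_div]
    calc xplus ω - xbar = xbar - (ε / (N : ℝ)) • ∑ i, G i ω - xbar := by rw [hxplus ω]
      _ = -((ε / (N : ℝ)) • ∑ i, G i ω) := by abel
      _ = -(ε • S ω) := by rw [h1]
  have hSnorm : ∀ ω, ‖xplus ω - xbar‖ ^ 2 = ε ^ 2 * ‖S ω‖ ^ 2 := by
    intro ω
    rw [hv ω, norm_neg, norm_smul, Real.norm_eq_abs, abs_of_nonneg hεpos.le, mul_pow]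
  have hSinner : ∀ ω, ⟪g, xplus ω - xbar⟫ = -(ε * ⟪g, S ω⟫) := by
    intro ω
    rw [hv ω, inner_neg_right, real_inner_smul_right]
  -- pointwise expansion of the RHS
  have hSexp : ∀ ω, F xbar - ε * ⟪g, S ω⟫ + L * ε ^ 2 * ‖S ω‖ ^ 2
      = (F xbar - ε * ⟪g, gb⟫ + L * ε ^ 2 * ‖gb‖ ^ 2)
        + (-ε) * ⟪g, T ω⟫ + (2 * L * ε ^ 2) * ⟪gb, T ω⟫ + (L * ε ^ 2) * ‖T ω‖ ^ 2 := by
    intro ω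
    rw [hS]
    simp only [inner_add_right]
    rw [norm_add_sq_real]
    ring
  -- pointwise upper bound
  have hup : ∀ ω, F (xplus ω) ≤ (F xbar - ε * ⟪g, gb⟫ + L * ε ^ 2 * ‖gb‖ ^ 2)
        + (-ε) * ⟪g, T ω⟫ + (2 * L * ε ^ 2) * ⟪gb, T ω⟫ + (L * ε ^ 2) * ‖T ω‖ ^ 2 := by
    intro ω
    rw [← hSexp ω]
    have h1 := (abs_le.mp (hdescent (xplus ω))).2
    rw [hSinner ω] at h1
    have h2 : L * ‖xplus ω - xbar‖ ^ 2 = L * ε ^ 2 * ‖S ω‖ ^ 2 := by rw [hSnorm ω]; ring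
    linarith [h1, h2.le, h2.ge]
  -- integrability of the RHS
  have hRHSint : Integrable (fun ω => (F xbar - ε * ⟪g, gb⟫ + L * ε ^ 2 * ‖gb‖ ^ 2)
        + (-ε) * ⟪g, T ω⟫ + (2 * L * ε ^ 2) * ⟪gb, T ω⟫ + (L * ε ^ 2) * ‖T ω‖ ^ 2) μ := by
    exact (((integrable_const _).add (hgTint.const_mul _)).add
      (hgbTint.const_mul _)).add (hT2int.const_mul _)
  -- integrability of the LHS
  have hxplusm : AEStronglyMeasurable xplus μ := by
    have : xplus = fun ω => xbar - ((η * τ) / (N : ℝ)) • ∑ i, G i ω := funext hxplus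
    rw [this]
    exact aestronglyMeasurable_const.sub
      ((Finset.aestronglyMeasurable_fun_sum univ (fun i _ => (hGint i).1)).const_smul ((η * τ) / (N : ℝ)))
  have hFxm : AEStronglyMeasurable (fun ω => F (xplus ω)) μ :=
    hdiffF.continuous.comp_aestronglyMeasurable hxplusm
  have hAint : Integrable (fun ω => F xbar + ⟪g, xplus ω - xbar⟫) μ := by
    have heq : (fun ω => F xbar + ⟪g, xplus ω - xbar⟫)
        = fun ω => (F xbar - ε * ⟪g, gb⟫) + (-ε) * ⟪g, T ω⟫ := by
      funext ω
      rw [hSinner ω, hS]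
      simp only [inner_add_right]
      ring
    rw [heq]
    exact (integrable_const _).add (hgTint.const_mul _)
  have hS2int : Integrable (fun ω => ‖S ω‖ ^ 2) μ := by
    have heq : (fun ω => ‖S ω‖ ^ 2)
        = fun ω => (‖gb‖ ^ 2 + 2 * ⟪gb, T ω⟫) + ‖T ω‖ ^ 2 := by
      funext ω; rw [hS, norm_add_sq_real]
    rw [heq]
    exact ((integrable_const _).add (hgbTint.const_mul _)).add hT2int
  have hφint : Integrable (fun ω => F (xplus ω) - (F xbar + ⟪g, xplus ω - xbar⟫)) μ := by
    apply Integrable.mono' ((hS2int.const_mul (L * ε ^ 2)))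
      (hFxm.sub hAint.1)
    refine Filter.Eventually.of_forall (fun ω => ?_)
    rw [Real.norm_eq_abs]
    have h1 := hdescent (xplus ω)
    have h2 : L * ‖xplus ω - xbar‖ ^ 2 = L * ε ^ 2 * ‖S ω‖ ^ 2 := by rw [hSnorm ω]; ring
    calc |F (xplus ω) - (F xbar + ⟪g, xplus ω - xbar⟫)|
        = |F (xplus ω) - F xbar - ⟪g, xplus ω - xbar⟫| := by ring_nf
      _ ≤ L * ‖xplus ω - xbar‖ ^ 2 := h1
      _ = L * ε ^ 2 * ‖S ω‖ ^ 2 := h2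
  have hFint : Integrable (fun ω => F (xplus ω)) μ := by
    have heq : (fun ω => F (xplus ω))
        = fun ω => (F (xplus ω) - (F xbar + ⟪g, xplus ω - xbar⟫))
            + (F xbar + ⟪g, xplus ω - xbar⟫) := by
      funext ω; ring
    rw [heq]
    exact hφint.add hAint
  -- integrate
  have hmain : ∫ ω, F (xplus ω) ∂μ
      ≤ (F xbar - ε * ⟪g, gb⟫ + L * ε ^ 2 * ‖gb‖ ^ 2) + L * ε ^ 2 * (σ ^ 2 / N) := by
    calc ∫ ω, F (xplus ω) ∂μ
        ≤ ∫ ω, ((F xbar - ε * ⟪g, gb⟫ + L * ε ^ 2 * ‖gb‖ ^ 2)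
            + (-ε) * ⟪g, T ω⟫ + (2 * L * ε ^ 2) * ⟪gb, T ω⟫
            + (L * ε ^ 2) * ‖T ω‖ ^ 2) ∂μ :=
          integral_mono hFint hRHSint hup
      _ = (F xbar - ε * ⟪g, gb⟫ + L * ε ^ 2 * ‖gb‖ ^ 2)
            + (-ε) * ∫ ω, ⟪g, T ω⟫ ∂μ + (2 * L * ε ^ 2) * ∫ ω, ⟪gb, T ω⟫ ∂μ
            + (L * ε ^ 2) * ∫ ω, ‖T ω‖ ^ 2 ∂μ := by
          have e1 : Integrable (fun ω => (-ε) * ⟪g, T ω⟫) μ := hgTint.const_mul _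
          have e2 : Integrable (fun ω => (2 * L * ε ^ 2) * ⟪gb, T ω⟫) μ :=
            hgbTint.const_mul _
          have e3 : Integrable (fun ω => (L * ε ^ 2) * ‖T ω‖ ^ 2) μ := hT2int.const_mul _
          have i0 : Integrable
              (fun _ : Ω => F xbar - ε * ⟪g, gb⟫ + L * ε ^ 2 * ‖gb‖ ^ 2) μ :=
            integrable_const _
          have i1 : Integrable (fun ω => F xbar - ε * ⟪g, gb⟫ + L * ε ^ 2 * ‖gb‖ ^ 2
              + (-ε) * ⟪g, T ω⟫) μ := i0.add e1
          have i2 : Integrable (fun ω => F xbar - ε * ⟪g, gb⟫ + L * ε ^ 2 * ‖gb‖ ^ 2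
              + (-ε) * ⟪g, T ω⟫ + (2 * L * ε ^ 2) * ⟪gb, T ω⟫) μ := i1.add e2
          rw [integral_add i2 e3, integral_add i1 e2, integral_add i0 e1, integral_const,
            integral_const_mul, integral_const_mul, integral_const_mul, probReal_univ]
          simp
      _ ≤ (F xbar - ε * ⟪g, gb⟫ + L * ε ^ 2 * ‖gb‖ ^ 2) + L * ε ^ 2 * (σ ^ 2 / N) := by
          rw [hgT, hgbT]
          have : (L * ε ^ 2) * ∫ ω, ‖T ω‖ ^ 2 ∂μ ≤ L * ε ^ 2 * (σ ^ 2 / N) := by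
            apply mul_le_mul_of_nonneg_left hT2 (by positivity)
          linarith
  -- final arithmetic
  clear_value ε c gb g D T S
  have hgclose : ‖g - gb‖ ^ 2 ≤ L ^ 2 / N * ∑ i, ‖xbar - x i‖ ^ 2 := by
    have hdiffeq : g - gb = (1 / (N : ℝ)) • ∑ i, (gradient (f i) xbar - c i) := by
      rw [hgdef, hgradF xbar, hgb, ← smul_sub, ← Finset.sum_sub_distrib]
    have hbound : ‖g - gb‖ ≤ (1 / (N : ℝ)) * ∑ i, L * ‖xbar - x i‖ := by
      rw [hdiffeq]
      refine sgd_norm_avg_le _ _ (fun i => ?_)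
      rw [hc]
      exact hLip i (x i) xbar
    have hsq : (∑ i, L * ‖xbar - x i‖) ^ 2 ≤ N * ∑ i, (L * ‖xbar - x i‖) ^ 2 := by
      have := sq_sum_le_card_mul_sum_sq (s := (univ : Finset (Fin N)))
        (f := fun i => L * ‖xbar - x i‖)
      rwa [card_univ, Fintype.card_fin] at this
    have hnn : (0 : ℝ) ≤ ∑ i, L * ‖xbar - x i‖ := by positivity
    calc ‖g - gb‖ ^ 2 ≤ ((1 / (N : ℝ)) * ∑ i, L * ‖xbar - x i‖) ^ 2 := by
          apply pow_le_pow_left₀ (norm_nonneg _) hbound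
      _ = (1 / (N : ℝ)) ^ 2 * (∑ i, L * ‖xbar - x i‖) ^ 2 := by ring
      _ ≤ (1 / (N : ℝ)) ^ 2 * ((N : ℝ) * ∑ i, (L * ‖xbar - x i‖) ^ 2) :=
          mul_le_mul_of_nonneg_left hsq (by positivity)
      _ = L ^ 2 / N * ∑ i, ‖xbar - x i‖ ^ 2 := by
          rw [Finset.mul_sum, Finset.mul_sum, Finset.mul_sum]
          refine Finset.sum_congr rfl (fun i _ => ?_)
          field_simp
  have hLε : L * ε ≤ 1 / 4 := by
    have h4 : (0 : ℝ) < 4 * L * τ := by positivity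
    have := (le_div_iff₀ h4).mp hητ
    calc L * ε = η * (4 * L * τ) / 4 := by rw [hε]; ring
      _ ≤ 1 / 4 := by linarith
  have hinner_id : 2 * ⟪g, gb⟫ = ‖g‖ ^ 2 + ‖gb‖ ^ 2 - ‖g - gb‖ ^ 2 := by
    have := norm_sub_sq_real g gb
    linarith
  -- combine
  have hKnn : (0 : ℝ) ≤ ∑ i, ‖xbar - x i‖ ^ 2 := by positivity
  have hPnn : (0 : ℝ) ≤ ‖g‖ ^ 2 := by positivity
  have hQnn : (0 : ℝ) ≤ ‖gb‖ ^ 2 := by positivity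
  have hWnn : (0 : ℝ) ≤ ‖g - gb‖ ^ 2 := by positivity
  have key : (F xbar - ε * ⟪g, gb⟫ + L * ε ^ 2 * ‖gb‖ ^ 2) + L * ε ^ 2 * (σ ^ 2 / N)
      ≤ F xbar - ε / 4 * ‖g‖ ^ 2 + ε * (L ^ 2 / N * ∑ i, ‖xbar - x i‖ ^ 2)
        + L * ε ^ 2 * (σ ^ 2 / N) := by
    have h1 : L * ε ^ 2 * ‖gb‖ ^ 2 ≤ (ε / 4) * ‖gb‖ ^ 2 := by
      nlinarith [mul_le_mul_of_nonneg_right hLε (mul_nonneg hεpos.le hQnn)]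
    have h2 : (ε / 2) * ‖g - gb‖ ^ 2 ≤ (ε / 2) * (L ^ 2 / N * ∑ i, ‖xbar - x i‖ ^ 2) :=
      mul_le_mul_of_nonneg_left hgclose (by positivity)
    have h3 : L * ε ^ 2 * (σ ^ 2 / N) = σ ^ 2 * ε ^ 2 * L / N := by ring
    have hid2 : ε * ⟪g, gb⟫ = ε / 2 * (‖g‖ ^ 2 + ‖gb‖ ^ 2 - ‖g - gb‖ ^ 2) := by
      rw [← hinner_id]; ring
    have hPmono : 0 ≤ ε * ‖g‖ ^ 2 := mul_nonneg hεpos.le hPnn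
    have hQmono : 0 ≤ ε * ‖gb‖ ^ 2 := mul_nonneg hεpos.le hQnn
    have h4 : 0 ≤ ε * (L ^ 2 / N * ∑ i, ‖xbar - x i‖ ^ 2) :=
      mul_nonneg hεpos.le (mul_nonneg (div_nonneg (sq_nonneg L) hNpos.le) hKnn)
    linarith [h1, h2, hid2, hPmono, hQmono, h4]
  have hfinal := le_trans hmain key
  refine le_trans hfinal (le_of_eq ?_)
  rw [hε, hgdef]
  ring
end

section
/- (Intermediate descent inequality, Eq. (proof-1-4)) Let τ ≥ 1 be an integer and η > 0. Define the random point x̄⁺ = x̄ − (ητ/N)·Σ_{i=1}^N G_i. Then E[f(x̄⁺)] ≤ f(x̄) + ητ·(Lητ − 1/2)·‖∇f(x̄)‖² + (ηL²τ/N)·(1/2 + ηLτ)·Σ_{i=1}^N ‖x̄ − x_i‖² + σ²η²τ²L/N. -/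
open Finset MeasureTheory
open scoped RealInnerProductSpace

lemma descent_lemma {E : Type*} [NormedAddCommGroup E] [InnerProductSpace ℝ E] [CompleteSpace E]
    {L : ℝ} {φ : E → ℝ} (hφ : Differentiable ℝ φ)
    (hLip : ∀ x y, ‖gradient φ y - gradient φ x‖ ≤ L * ‖y - x‖)
    (a b : E) :
    abs (φ b - φ a - ⟪gradient φ a, b - a⟫) ≤ L / 2 * ‖b - a‖ ^ 2 := by
  set v := b - a with hv
  have hp : ∀ t : ℝ, HasDerivAt (fun t : ℝ => a + t • v) v t := fun t => by
    simpa using ((hasDerivAt_id t).smul_const v).const_add a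
  have hg : ∀ t : ℝ, HasDerivAt (fun t => φ (a + t • v))
      ⟪gradient φ (a + t • v), v⟫ t := by
    intro t
    have h1 := (hφ (a + t • v)).hasGradientAt.hasFDerivAt
    have h2 := h1.comp_hasDerivAt t (hp t)
    simpa [InnerProductSpace.toDual_apply_apply, Function.comp_def] using h2
  have hgc : Continuous (gradient φ) := by
    have : LipschitzWith (Real.toNNReal L) (gradient φ) := by
      apply LipschitzWith.of_dist_le_mul
      intro x y
      rw [dist_eq_norm, dist_eq_norm]
      calc ‖gradient φ x - gradient φ y‖ ≤ L * ‖x - y‖ := hLip y x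
        _ ≤ Real.toNNReal L * ‖x - y‖ := by
            gcongr
            exact Real.le_coe_toNNReal L
    exact this.continuous
  have hcont : Continuous fun t : ℝ => ⟪gradient φ (a + t • v), v⟫ := by
    exact (hgc.comp (by continuity)).inner continuous_const
  have key : φ b - φ a = ∫ t in (0:ℝ)..1, ⟪gradient φ (a + t • v), v⟫ := by
    have := intervalIntegral.integral_eq_sub_of_hasDerivAt
      (f := fun t => φ (a + t • v)) (fun t _ => hg t) (hcont.intervalIntegrable 0 1)
    rw [this]
    norm_num [hv]
  have hconst : ⟪gradient φ a, v⟫ = ∫ t in (0:ℝ)..1, ⟪gradient φ a, v⟫ := by simp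
  rw [key, hconst, ← intervalIntegral.integral_sub (hcont.intervalIntegrable 0 1)
      (intervalIntegrable_const)]
  have habs : |∫ t in (0:ℝ)..1, (⟪gradient φ (a + t • v), v⟫ - ⟪gradient φ a, v⟫)|
      ≤ ∫ t in (0:ℝ)..1, |⟪gradient φ (a + t • v), v⟫ - ⟪gradient φ a, v⟫| :=
    intervalIntegral.abs_integral_le_integral_abs (by norm_num)
  refine habs.trans ?_
  have hbound : ∫ t in (0:ℝ)..1, |⟪gradient φ (a + t • v), v⟫ - ⟪gradient φ a, v⟫|
      ≤ ∫ t in (0:ℝ)..1, L * ‖v‖ ^ 2 * t := by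
    apply intervalIntegral.integral_mono_on (by norm_num)
      ((hcont.sub continuous_const).abs.intervalIntegrable 0 1)
      ((continuous_const.mul continuous_id).intervalIntegrable 0 1)
    intro t ht
    simp only [Pi.sub_apply, Pi.mul_apply, id]
    rw [← inner_sub_left]
    refine (abs_real_inner_le_norm _ _).trans ?_
    have h3 : ‖gradient φ (a + t • v) - gradient φ a‖ ≤ L * (t * ‖v‖) := by
      have := hLip a (a + t • v)
      simpa [norm_smul, abs_of_nonneg ht.1] using this
    calc ‖gradient φ (a + t • v) - gradient φ a‖ * ‖v‖ ≤ (L * (t * ‖v‖)) * ‖v‖ := by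
          gcongr
      _ = L * ‖v‖ ^ 2 * t := by ring
  refine hbound.trans ?_
  rw [intervalIntegral.integral_const_mul, integral_id]
  ring_nf
  norm_num

lemma gradient_avg {d N : ℕ} (f : Fin N → EuclideanSpace ℝ (Fin d) → ℝ)
    (hdiff : ∀ i, Differentiable ℝ (f i)) (c : ℝ) (z : EuclideanSpace ℝ (Fin d)) :
    gradient (fun z => c * ∑ i, f i z) z = c • ∑ i, gradient (f i) z := by
  have hs : HasFDerivAt (fun z => ∑ i, f i z) (∑ i, fderiv ℝ (f i) z) z :=
    HasFDerivAt.fun_sum fun i _ => ((hdiff i) z).hasFDerivAt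
  have h : HasFDerivAt (fun z => c * ∑ i, f i z) (c • ∑ i, fderiv ℝ (f i) z) z :=
    hs.const_mul c
  rw [h.hasGradientAt.gradient, LinearIsometryEquiv.map_smul, map_sum]
  rfl


lemma final_alg (Lr n t X K Q s2 I SG : ℝ) (hL : 0 < Lr) (hn : 1 ≤ n) (ht : 0 < t)
    (hX : 0 ≤ X) (hK : 0 ≤ K) (hQ : 0 ≤ Q) (hs2 : 0 ≤ s2)
    (hI : -I ≤ X * K) (hK2 : K ^ 2 ≤ Lr ^ 2 * (n * Q))
    (hsg2 : SG ≤ (n * X + K) ^ 2) :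
    -(t / n) * (n * X ^ 2 + I) + Lr / 2 * (t / n) ^ 2 * (SG + n * s2)
      ≤ t * (Lr * t - 1 / 2) * X ^ 2 + (Lr ^ 2 * t / n) * (1 / 2 + Lr * t) * Q
        + s2 * t ^ 2 * Lr / n := by
  have hn0 : (0 : ℝ) < n := lt_of_lt_of_le one_pos hn
  have hn0' : n ≠ 0 := ne_of_gt hn0
  have h2n : (0 : ℝ) < 2 * n ^ 2 := by positivity
  rw [← mul_le_mul_iff_of_pos_right h2n]
  have e1 : (-(t / n) * (n * X ^ 2 + I) + Lr / 2 * (t / n) ^ 2 * (SG + n * s2)) * (2 * n ^ 2)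
      = -(2 * n * t) * (n * X ^ 2 + I) + Lr * t ^ 2 * (SG + n * s2) := by
    field_simp
  have e2 : (t * (Lr * t - 1 / 2) * X ^ 2 + (Lr ^ 2 * t / n) * (1 / 2 + Lr * t) * Q
        + s2 * t ^ 2 * Lr / n) * (2 * n ^ 2)
      = 2 * n ^ 2 * t * (Lr * t - 1 / 2) * X ^ 2
        + (t + 2 * Lr * t ^ 2) * (Lr ^ 2 * (n * Q)) + 2 * s2 * t ^ 2 * Lr * n := by
    field_simp
  rw [e1, e2]
  have p1 : Lr * t ^ 2 * SG ≤ Lr * t ^ 2 * (n ^ 2 * X ^ 2 + 2 * (n * (X * K)) + K ^ 2) := by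
    have := mul_le_mul_of_nonneg_left hsg2 (show (0:ℝ) ≤ Lr * t ^ 2 by positivity)
    calc Lr * t ^ 2 * SG ≤ Lr * t ^ 2 * ((n * X + K) ^ 2) := this
      _ = Lr * t ^ 2 * (n ^ 2 * X ^ 2 + 2 * (n * (X * K)) + K ^ 2) := by ring
  have p2 : -(2 * n * t) * I ≤ 2 * n * t * (X * K) := by
    have := mul_le_mul_of_nonneg_left hI (show (0:ℝ) ≤ 2 * n * t by positivity)
    calc -(2 * n * t) * I = 2 * n * t * (-I) := by ring
      _ ≤ 2 * n * t * (X * K) := this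
  have amgm : 2 * (n * (X * K)) ≤ n ^ 2 * X ^ 2 + K ^ 2 := by nlinarith [sq_nonneg (n * X - K)]
  have p3 : t * (2 * (n * (X * K))) ≤ t * (n ^ 2 * X ^ 2 + K ^ 2) :=
    mul_le_mul_of_nonneg_left amgm ht.le
  have p4 : Lr * t ^ 2 * (2 * (n * (X * K))) ≤ Lr * t ^ 2 * (n ^ 2 * X ^ 2 + K ^ 2) :=
    mul_le_mul_of_nonneg_left amgm (by positivity)
  have p5 : (t + 2 * Lr * t ^ 2) * K ^ 2 ≤ (t + 2 * Lr * t ^ 2) * (Lr ^ 2 * (n * Q)) :=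
    mul_le_mul_of_nonneg_left hK2 (by positivity)
  have p6 : (0:ℝ) ≤ Lr * t ^ 2 * (n * s2) := by positivity
  nlinarith [p1, p2, p3, p4, p5, p6]

set_option maxHeartbeats 1000000 in
/-- **Intermediate descent inequality (Eq. proof-1-4)**. -/
theorem stmt_7 (d N : ℕ) (hN : 1 ≤ N)
    {Ω : Type*} [MeasurableSpace Ω] (μ : Measure Ω) [IsProbabilityMeasure μ]
    (L σ η : ℝ) (hL : 0 < L) (hσ : 0 ≤ σ)
    (f : Fin N → EuclideanSpace ℝ (Fin d) → ℝ)
    (hdiff : ∀ i, Differentiable ℝ (f i))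
    (hLip : ∀ i x y, ‖gradient (f i) y - gradient (f i) x‖ ≤ L * ‖y - x‖)
    (F : EuclideanSpace ℝ (Fin d) → ℝ)
    (hF : F = fun z => (1 / (N : ℝ)) * ∑ i, f i z)
    (x : Fin N → EuclideanSpace ℝ (Fin d))
    (xbar : EuclideanSpace ℝ (Fin d))
    (hxbar : xbar = (1 / (N : ℝ)) • ∑ i, x i)
    (G : Fin N → Ω → EuclideanSpace ℝ (Fin d))
    (hGint : ∀ i, Integrable (G i) μ)
    (hindep : ProbabilityTheory.iIndepFun G μ)
    (hmean : ∀ i, ∫ ω, G i ω ∂μ = gradient (f i) (x i))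
    (hvarint : ∀ i, Integrable (fun ω => ‖G i ω - gradient (f i) (x i)‖ ^ 2) μ)
    (hvar : ∀ i, ∫ ω, ‖G i ω - gradient (f i) (x i)‖ ^ 2 ∂μ ≤ σ ^ 2)
    (τ : ℕ) (hτ : 1 ≤ τ) (hη : 0 < η)
    (xplus : Ω → EuclideanSpace ℝ (Fin d))
    (hxplus : ∀ ω, xplus ω = xbar - ((η * τ) / (N : ℝ)) • ∑ i, G i ω) :
    ∫ ω, F (xplus ω) ∂μ ≤
      F xbar + η * τ * (L * η * τ - 1 / 2) * ‖gradient F xbar‖ ^ 2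
        + (η * L ^ 2 * τ / (N : ℝ)) * (1 / 2 + η * L * τ) * ∑ i, ‖xbar - x i‖ ^ 2
        + σ ^ 2 * η ^ 2 * τ ^ 2 * L / (N : ℝ) := by
  have hn0 : (0:ℝ) < N := by exact_mod_cast hN
  have hn1 : (1:ℝ) ≤ N := by exact_mod_cast hN
  have ht1 : (1:ℝ) ≤ τ := by exact_mod_cast hτ
  have ht0 : (0:ℝ) < η * τ := by positivity
  -- notation
  set c : ℝ := η * τ / N with hc
  set t : ℝ := η * τ with htdef
  set W : Ω → EuclideanSpace ℝ (Fin d) := fun ω => ∑ i, G i ω with hWdef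
  set g : Fin N → EuclideanSpace ℝ (Fin d) := fun i => gradient (f i) (x i) with hgdef
  set Y : Fin N → Ω → EuclideanSpace ℝ (Fin d) := fun i ω => G i ω - g i with hYdef
  set S : Ω → EuclideanSpace ℝ (Fin d) := fun ω => ∑ i, Y i ω with hSdef
  set sg : EuclideanSpace ℝ (Fin d) := ∑ i, g i with hsgdef
  set u : EuclideanSpace ℝ (Fin d) := ∑ i, gradient (f i) xbar with hudef
  set h : EuclideanSpace ℝ (Fin d) := gradient F xbar with hhdef
  set Q : ℝ := ∑ i, ‖xbar - x i‖ ^ 2 with hQdef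
  -- basic facts about F
  have hFdiff : Differentiable ℝ F := by
    rw [hF]
    exact (Differentiable.fun_sum fun i _ => hdiff i).const_mul _
  have hgradF : ∀ z, gradient F z = (1 / (N:ℝ)) • ∑ i, gradient (f i) z := by
    intro z
    rw [hF]
    exact gradient_avg f hdiff _ z
  have hFLip : ∀ p q, ‖gradient F q - gradient F p‖ ≤ L * ‖q - p‖ := by
    intro p q
    rw [hgradF, hgradF, ← smul_sub, ← Finset.sum_sub_distrib, norm_smul]
    have h1 : ‖∑ i, (gradient (f i) q - gradient (f i) p)‖
        ≤ ∑ i : Fin N, L * ‖q - p‖ := by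
      refine (norm_sum_le _ _).trans ?_
      exact Finset.sum_le_sum fun i _ => hLip i p q
    calc ‖(1:ℝ) / N‖ * ‖∑ i, (gradient (f i) q - gradient (f i) p)‖
        ≤ ‖(1:ℝ) / N‖ * ∑ i : Fin N, L * ‖q - p‖ := by gcongr
      _ = L * ‖q - p‖ := by
          rw [Real.norm_eq_abs, abs_of_pos (by positivity), Finset.sum_const, card_univ,
            Fintype.card_fin]
          field_simp
          rw [nsmul_eq_mul]; ring
  -- integrability / means of basic random vectors
  have hWint : Integrable W μ := integrable_finset_sum _ fun i _ => hGint i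
  have hWmean : ∫ ω, W ω ∂μ = sg := by
    rw [hWdef, integral_finset_sum _ fun i _ => hGint i]
    simp [hmean, hsgdef, hgdef]
  have hYint : ∀ i, Integrable (Y i) μ := fun i => (hGint i).sub (integrable_const _)
  have hYmean : ∀ i, ∫ ω, Y i ω ∂μ = 0 := by
    intro i
    rw [hYdef]
    simp only
    rw [integral_sub (hGint i) (integrable_const _), hmean i, integral_const]
    simp [hgdef]
  have hYsm : ∀ i, AEStronglyMeasurable (Y i) μ := fun i => (hYint i).aestronglyMeasurable
  have hYsq_int : ∀ i, Integrable (fun ω => ‖Y i ω‖ ^ 2) μ := fun i => hvarint i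
  have hYsq_mean : ∀ i, ∫ ω, ‖Y i ω‖ ^ 2 ∂μ ≤ σ ^ 2 := fun i => hvar i
  have hSint : Integrable S μ := integrable_finset_sum _ fun i _ => hYint i
  have hSmean : ∫ ω, S ω ∂μ = 0 := by
    rw [hSdef, integral_finset_sum _ fun i _ => hYint i]
    simp [hYmean]
  -- products of pairs
  have hinner_int : ∀ i j, Integrable (fun ω => ⟪Y i ω, Y j ω⟫) μ := by
    intro i j
    refine Integrable.mono' (((hYsq_int i).add (hYsq_int j)).const_mul (1/2))
      ((hYsm i).inner (hYsm j)) ?_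
    filter_upwards with ω
    simp only [Pi.add_apply]
    rw [Real.norm_eq_abs]
    refine (abs_real_inner_le_norm _ _).trans ?_
    nlinarith [sq_nonneg (‖Y i ω‖ - ‖Y j ω‖), norm_nonneg (Y i ω), norm_nonneg (Y j ω)]
  have hcross : ∀ i j, i ≠ j → ∫ ω, ⟪Y i ω, Y j ω⟫ ∂μ = 0 := by
    intro i j hij
    have hmeask : ∀ (k : Fin d) (m : EuclideanSpace ℝ (Fin d)),
        Measurable (fun v : EuclideanSpace ℝ (Fin d) => v k - m k) := by
      intro k m
      exact ((EuclideanSpace.proj (𝕜 := ℝ) k).continuous.measurable).sub measurable_const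
    have hAk : ∀ k : Fin d, ProbabilityTheory.IndepFun
        (fun ω => Y i ω k) (fun ω => Y j ω k) μ := by
      intro k
      exact (hindep.indepFun hij).comp (hmeask k (g i)) (hmeask k (g j))
    have hAint : ∀ (l : Fin N) (k : Fin d), Integrable (fun ω => Y l ω k) μ := by
      intro l k
      exact (EuclideanSpace.proj (𝕜 := ℝ) k).integrable_comp (hYint l)
    have hAmean : ∀ (l : Fin N) (k : Fin d), ∫ ω, Y l ω k ∂μ = 0 := by
      intro l k
      have := (EuclideanSpace.proj (𝕜 := ℝ) k).integral_comp_comm (hYint l)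
      rw [hYmean l] at this
      simpa using this
    have hexp : ∀ ω, ⟪Y i ω, Y j ω⟫ = ∑ k, Y i ω k * Y j ω k := by
      intro ω
      simp [PiLp.inner_apply, RCLike.inner_apply, starRingEnd_apply]
      exact Finset.sum_congr rfl fun k _ => mul_comm _ _
    calc ∫ ω, ⟪Y i ω, Y j ω⟫ ∂μ = ∫ ω, ∑ k, Y i ω k * Y j ω k ∂μ := by
          simp_rw [hexp]
      _ = ∑ k, ∫ ω, Y i ω k * Y j ω k ∂μ := by
          refine integral_finset_sum _ fun k _ => ?_
          exact (hAk k).integrable_mul (hAint i k) (hAint j k)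
      _ = ∑ k : Fin d, (∫ ω, Y i ω k ∂μ) * (∫ ω, Y j ω k ∂μ) := by
          refine Finset.sum_congr rfl fun k _ => ?_
          exact (hAk k).integral_mul_eq_mul_integral (hAint i k).aestronglyMeasurable
            (hAint j k).aestronglyMeasurable
      _ = 0 := by simp [hAmean]
  -- second moment of S
  have hSexp : ∀ ω, ‖S ω‖ ^ 2 = ∑ i, ∑ j, ⟪Y i ω, Y j ω⟫ := by
    intro ω
    rw [← real_inner_self_eq_norm_sq, hSdef]
    simp only
    rw [sum_inner]
    exact Finset.sum_congr rfl fun i _ => by rw [inner_sum]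
  have hSsq_int : Integrable (fun ω => ‖S ω‖ ^ 2) μ := by
    have : (fun ω => ‖S ω‖ ^ 2) = fun ω => ∑ i, ∑ j, ⟪Y i ω, Y j ω⟫ := funext hSexp
    rw [this]
    exact integrable_finset_sum _ fun i _ =>
      integrable_finset_sum _ fun j _ => hinner_int i j
  have hSsq_mean : ∫ ω, ‖S ω‖ ^ 2 ∂μ ≤ N * σ ^ 2 := by
    have h1 : (fun ω => ‖S ω‖ ^ 2) = fun ω => ∑ i, ∑ j, ⟪Y i ω, Y j ω⟫ := funext hSexp
    rw [h1, integral_finset_sum _ fun i _ =>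
      integrable_finset_sum _ fun j _ => hinner_int i j]
    have h2 : ∀ i : Fin N, (∫ ω, ∑ j, ⟪Y i ω, Y j ω⟫ ∂μ) = ∫ ω, ‖Y i ω‖ ^ 2 ∂μ := by
      intro i
      rw [integral_finset_sum _ fun j _ => hinner_int i j]
      rw [Finset.sum_eq_single_of_mem i (Finset.mem_univ i)
        (fun j _ hji => hcross i j (Ne.symm hji))]
      congr 1
      funext ω
      rw [real_inner_self_eq_norm_sq]
    rw [Finset.sum_congr rfl fun i _ => h2 i]
    calc ∑ i : Fin N, ∫ ω, ‖Y i ω‖ ^ 2 ∂μ ≤ ∑ i : Fin N, σ ^ 2 :=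
          Finset.sum_le_sum fun i _ => hYsq_mean i
      _ = N * σ ^ 2 := by rw [Finset.sum_const, card_univ, Fintype.card_fin]; ring
  -- decomposition of W
  have hW_eq : ∀ ω, W ω = sg + S ω := by
    intro ω
    rw [hWdef, hSdef, hsgdef]
    simp only [hYdef]
    rw [Finset.sum_sub_distrib]
    abel
  have hWsq : ∀ ω, ‖W ω‖ ^ 2 = ‖sg‖ ^ 2 + 2 * ⟪sg, S ω⟫ + ‖S ω‖ ^ 2 := by
    intro ω
    rw [hW_eq ω]
    exact norm_add_sq_real sg (S ω)
  have hinner_sg_int : Integrable (fun ω => ⟪sg, S ω⟫) μ := by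
    have := (innerSL ℝ sg).integrable_comp hSint
    simpa using this
  have hWsq_int : Integrable (fun ω => ‖W ω‖ ^ 2) μ := by
    have h1 : (fun ω => ‖W ω‖ ^ 2)
        = fun ω => ‖sg‖ ^ 2 + 2 * ⟪sg, S ω⟫ + ‖S ω‖ ^ 2 := funext hWsq
    rw [h1]
    exact ((integrable_const _).add (hinner_sg_int.const_mul 2)).add hSsq_int
  have hWsq_mean : ∫ ω, ‖W ω‖ ^ 2 ∂μ ≤ ‖sg‖ ^ 2 + N * σ ^ 2 := by
    have h1 : (fun ω => ‖W ω‖ ^ 2)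
        = fun ω => ‖sg‖ ^ 2 + 2 * ⟪sg, S ω⟫ + ‖S ω‖ ^ 2 := funext hWsq
    have i2 : Integrable (fun ω => ‖sg‖ ^ 2 + 2 * ⟪sg, S ω⟫) μ :=
      (integrable_const _).add (hinner_sg_int.const_mul 2)
    rw [h1, integral_add i2 hSsq_int,
      integral_add (integrable_const _) (hinner_sg_int.const_mul 2),
      integral_const_mul _ _, integral_inner hSint, hSmean]
    simp only [inner_zero_right, mul_zero, add_zero, integral_const, measure_univ, probReal_univ,
      ENNReal.toReal_one, smul_eq_mul, one_mul]
    linarith [hSsq_mean]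
  have hinnerW_int : Integrable (fun ω => ⟪h, W ω⟫) μ := by
    have := (innerSL ℝ h).integrable_comp hWint
    simpa using this
  have hinnerW_mean : ∫ ω, ⟪h, W ω⟫ ∂μ = ⟪h, sg⟫ := by
    rw [integral_inner hWint, hWmean]
  -- pointwise descent inequality
  have hxw : ∀ ω, xplus ω - xbar = -(c • W ω) := by
    intro ω
    rw [hxplus ω, hWdef]
    abel
  have hdesc : ∀ ω, abs (F (xplus ω) - F xbar - (-(c * ⟪h, W ω⟫)))
      ≤ L / 2 * (c ^ 2 * ‖W ω‖ ^ 2) := by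
    intro ω
    have hthis := descent_lemma hFdiff hFLip xbar (xplus ω)
    rw [hxw ω, ← hhdef] at hthis
    have e1 : ⟪h, -(c • W ω)⟫ = -(c * ⟪h, W ω⟫) := by
      rw [inner_neg_right, real_inner_smul_right]
    have e2 : ‖-(c • W ω)‖ ^ 2 = c ^ 2 * ‖W ω‖ ^ 2 := by
      rw [norm_neg, norm_smul, mul_pow, Real.norm_eq_abs, sq_abs]
    rw [e1, e2] at hthis
    exact hthis
  -- integrability of F ∘ xplus
  have hxplus_aesm : AEStronglyMeasurable xplus μ := by
    have h1 : xplus = fun ω => xbar - c • W ω := by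
      funext ω; rw [hxplus ω, hWdef, hc]
    rw [h1]
    exact aestronglyMeasurable_const.sub (hWint.aestronglyMeasurable.const_smul c)
  have hFxplus_aesm : AEStronglyMeasurable (fun ω => F (xplus ω)) μ :=
    hFdiff.continuous.comp_aestronglyMeasurable hxplus_aesm
  have hr_int : Integrable (fun ω => F (xplus ω) - (F xbar - c * ⟪h, W ω⟫)) μ := by
    refine Integrable.mono' (hWsq_int.const_mul (L / 2 * c ^ 2))
      (hFxplus_aesm.sub (aestronglyMeasurable_const.sub
        (hinnerW_int.aestronglyMeasurable.const_mul c))) ?_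
    filter_upwards with ω
    rw [Real.norm_eq_abs]
    have := hdesc ω
    calc |F (xplus ω) - (F xbar - c * ⟪h, W ω⟫)|
        = |F (xplus ω) - F xbar - (-(c * ⟪h, W ω⟫))| := by ring_nf
      _ ≤ L / 2 * (c ^ 2 * ‖W ω‖ ^ 2) := hdesc ω
      _ = L / 2 * c ^ 2 * ‖W ω‖ ^ 2 := by ring
  have hFxplus_int : Integrable (fun ω => F (xplus ω)) μ := by
    have h1 : (fun ω => F (xplus ω))
        = fun ω => (F xbar - c * ⟪h, W ω⟫)
            + (F (xplus ω) - (F xbar - c * ⟪h, W ω⟫)) := by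
      funext ω; ring
    rw [h1]
    exact ((integrable_const _).sub (hinnerW_int.const_mul c)).add hr_int
  -- integrate the descent inequality
  have hΦint : Integrable
      (fun ω => F xbar - c * ⟪h, W ω⟫ + L / 2 * c ^ 2 * ‖W ω‖ ^ 2) μ :=
    ((integrable_const _).sub (hinnerW_int.const_mul c)).add
      (hWsq_int.const_mul (L / 2 * c ^ 2))
  have hmain : ∫ ω, F (xplus ω) ∂μ
      ≤ F xbar - c * ⟪h, sg⟫ + L / 2 * c ^ 2 * (‖sg‖ ^ 2 + N * σ ^ 2) := by
    have h1 : ∫ ω, F (xplus ω) ∂μ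
        ≤ ∫ ω, (F xbar - c * ⟪h, W ω⟫ + L / 2 * c ^ 2 * ‖W ω‖ ^ 2) ∂μ := by
      refine integral_mono hFxplus_int hΦint fun ω => ?_
      have h2 := (abs_le.mp (hdesc ω)).2
      have h3 : L / 2 * (c ^ 2 * ‖W ω‖ ^ 2) = L / 2 * c ^ 2 * ‖W ω‖ ^ 2 := by ring
      linarith [h2, h3.le]
    refine h1.trans ?_
    have i3 : Integrable (fun ω => F xbar - c * ⟪h, W ω⟫) μ :=
      (integrable_const _).sub (hinnerW_int.const_mul c)
    have i4 : Integrable (fun ω => L / 2 * c ^ 2 * ‖W ω‖ ^ 2) μ :=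
      hWsq_int.const_mul (L / 2 * c ^ 2)
    rw [integral_add i3 i4,
      integral_sub (integrable_const _) (hinnerW_int.const_mul c),
      integral_const_mul _ _, hinnerW_mean, integral_const_mul _ _, integral_const]
    simp only [measure_univ, probReal_univ, ENNReal.toReal_one, smul_eq_mul, one_mul]
    have h5 : L / 2 * c ^ 2 * ∫ ω, ‖W ω‖ ^ 2 ∂μ
        ≤ L / 2 * c ^ 2 * (‖sg‖ ^ 2 + N * σ ^ 2) :=
      mul_le_mul_of_nonneg_left hWsq_mean (by positivity)
    exact add_le_add_right h5 _
  -- algebraic finale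
  clear_value c t W g Y S sg u h Q
  have hh_eq : h = (1 / (N:ℝ)) • u := by rw [hhdef, hgradF xbar, hudef]
  have hsg_eq : sg = (N:ℝ) • h + (sg - u) := by
    rw [hh_eq, smul_smul]
    rw [mul_one_div, div_self (ne_of_gt hn0), one_smul]
    abel
  have hDnorm : ‖sg - u‖ ≤ L * ∑ i, ‖xbar - x i‖ := by
    rw [hsgdef, hudef, ← Finset.sum_sub_distrib]
    refine (norm_sum_le _ _).trans ?_
    rw [Finset.mul_sum]
    refine Finset.sum_le_sum fun i _ => ?_
    have := hLip i xbar (x i)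
    rw [hgdef]
    simp only
    calc ‖gradient (f i) (x i) - gradient (f i) xbar‖ ≤ L * ‖x i - xbar‖ := hLip i xbar (x i)
      _ = L * ‖xbar - x i‖ := by rw [norm_sub_rev]
  have hcheb : (∑ i, ‖xbar - x i‖) ^ 2 ≤ (N:ℝ) * Q := by
    rw [hQdef]
    have := sq_sum_le_card_mul_sum_sq (s := (univ : Finset (Fin N)))
      (f := fun i => ‖xbar - x i‖)
    simpa [card_univ] using this
  have hQ0 : 0 ≤ Q := by rw [hQdef]; positivity
  have hK0 : 0 ≤ ‖sg - u‖ := norm_nonneg _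
  have hK2 : ‖sg - u‖ ^ 2 ≤ L ^ 2 * ((N:ℝ) * Q) := by
    have hs0 : 0 ≤ ∑ i, ‖xbar - x i‖ := Finset.sum_nonneg fun i _ => norm_nonneg _
    calc ‖sg - u‖ ^ 2 ≤ (L * ∑ i, ‖xbar - x i‖) ^ 2 := by nlinarith [hDnorm]
      _ = L ^ 2 * (∑ i, ‖xbar - x i‖) ^ 2 := by ring
      _ ≤ L ^ 2 * ((N:ℝ) * Q) := by nlinarith [hcheb]
  have hIP : ⟪h, sg⟫ = (N:ℝ) * ‖h‖ ^ 2 + ⟪h, sg - u⟫ := by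
    conv_lhs => rw [hsg_eq]
    rw [inner_add_right, real_inner_smul_right, real_inner_self_eq_norm_sq]
  have hI : |⟪h, sg - u⟫| ≤ ‖h‖ * ‖sg - u‖ := abs_real_inner_le_norm _ _
  have hIneg : -(⟪h, sg - u⟫) ≤ ‖h‖ * ‖sg - u‖ := by
    have := (abs_le.mp hI).1; linarith
  have hsgn : ‖sg‖ ≤ (N:ℝ) * ‖h‖ + ‖sg - u‖ := by
    conv_lhs => rw [hsg_eq]
    refine (norm_add_le _ _).trans ?_
    rw [norm_smul, Real.norm_eq_abs, abs_of_pos hn0]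
  have hsg2 : ‖sg‖ ^ 2 ≤ ((N:ℝ) * ‖h‖ + ‖sg - u‖) ^ 2 := by
    nlinarith [norm_nonneg sg, norm_nonneg h, mul_nonneg (le_of_lt hn0) (norm_nonneg h)]
  refine hmain.trans ?_
  have key := final_alg L (N:ℝ) t ‖h‖ ‖sg - u‖ Q (σ ^ 2) ⟪h, sg - u⟫ (‖sg‖ ^ 2)
    hL hn1 ht0 (norm_nonneg _) hK0 hQ0 (sq_nonneg σ) hIneg hK2 hsg2
  have key2 := add_le_add_right key (F xbar)
  rw [hc, htdef, hhdef, hQdef]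
  rw [htdef, hhdef, hQdef] at key2
  rw [hhdef] at hIP
  calc F xbar - η * ↑τ / ↑N * ⟪gradient F xbar, sg⟫
        + L / 2 * (η * ↑τ / ↑N) ^ 2 * (‖sg‖ ^ 2 + ↑N * σ ^ 2)
      = F xbar + (-(η * ↑τ / ↑N) * ((↑N : ℝ) * ‖gradient F xbar‖ ^ 2
          + ⟪gradient F xbar, sg - u⟫)
        + L / 2 * (η * ↑τ / ↑N) ^ 2 * (‖sg‖ ^ 2 + ↑N * σ ^ 2)) := by
        rw [hIP]; ring
    _ ≤ F xbar + (η * ↑τ * (L * (η * ↑τ) - 1 / 2) * ‖gradient F xbar‖ ^ 2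
        + (L ^ 2 * (η * ↑τ) / ↑N) * (1 / 2 + L * (η * ↑τ)) * ∑ i, ‖xbar - x i‖ ^ 2
        + σ ^ 2 * (η * ↑τ) ^ 2 * L / ↑N) := key2
    _ = F xbar + η * ↑τ * (L * η * ↑τ - 1 / 2) * ‖gradient F xbar‖ ^ 2
        + (η * L ^ 2 * ↑τ / ↑N) * (1 / 2 + η * L * ↑τ) * ∑ i, ‖xbar - x i‖ ^ 2
        + σ ^ 2 * η ^ 2 * ↑τ ^ 2 * L / ↑N := by ring
end
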